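/- Let k be a normed division ring and Z a subring of k such that every nonzero element z ∈ Z satisfies ‖z‖ ≥ 1. Let n ≥ 1, a_1,…,a_n ∈ Z, and x₀ ∈ k with forward orbit x_0 = x₀, x_{i+1} = (x_i)⁻¹ − a_{i+1}; assume x_i ≠ 0 for 0 ≤ i ≤ n−1 and ‖x_i‖ < 1 for 0 ≤ i ≤ n. Then Q[a_i,…,a_n] ≠ 0 for every 1 ≤ i ≤ n, where Q is defined on suffixes by Q[] = 1, P[] = 0, P[a_i,…,a_n] = Q[a_{i+1},…,a_n], Q[a_i,…,a_n] = a_i·Q[a_{i+1},…,a_n] + P[a_{i+1},…,a_n]. -/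

import Mathlib

/-- `(P l, Q l)` for a digit list `l = [a_i, …, a_n]`:
`P [] = 0`, `Q [] = 1`, `P (a :: l) = Q l`, `Q (a :: l) = a * Q l + P l`. -/
def cfPQ {k : Type*} [DivisionRing k] : List k → k × k
  | [] => (0, 1)
  | a :: l => ((cfPQ l).2, a * (cfPQ l).2 + (cfPQ l).1)

/-- The digit list `[a_i, a_{i+1}, …, a_n]`. -/
def suffList {k : Type*} (a : ℕ → k) (i n : ℕ) : List k :=
  (List.range (n + 1 - i)).map (fun j => a (i + j))

lemma cfPQ_mem {k : Type*} [DivisionRing k] (Z : Subring k) :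
    ∀ l : List k, (∀ x ∈ l, x ∈ Z) → (cfPQ l).1 ∈ Z ∧ (cfPQ l).2 ∈ Z
  | [], _ => by exact ⟨zero_mem _, one_mem _⟩
  | a :: l, h => by
    have ih := cfPQ_mem Z l (fun x hx => h x (List.mem_cons_of_mem _ hx))
    refine ⟨ih.2, ?_⟩
    exact add_mem (mul_mem (h a List.mem_cons_self) ih.2) ih.1

lemma suffList_cons {k : Type*} (a : ℕ → k) (i n : ℕ) (h : i ≤ n) :
    suffList a i n = a i :: suffList a (i + 1) n := by
  unfold suffList
  have h1 : n + 1 - i = (n + 1 - (i + 1)) + 1 := by omega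
  rw [h1, List.range_succ_eq_map, List.map_cons, List.map_map]
  refine congrArg₂ _ (by simp) ?_
  apply congrArg₂ _ ?_ rfl
  funext j
  simp only [Function.comp_apply]
  congr 1
  omega

lemma suffList_nil {k : Type*} (a : ℕ → k) (n : ℕ) : suffList a (n + 1) n = [] := by
  simp [suffList]

/-- Lemma 2.5 (Qnonzero) of the paper: the continued fraction denominators of
all suffixes are nonzero when the orbit stays in the open unit ball. -/
theorem cf_Q_nonzero {k : Type*} [NormedDivisionRing k]
    (Z : Subring k) (hZ : ∀ z ∈ Z, z ≠ 0 → 1 ≤ ‖z‖)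
    (n : ℕ) (hn : 1 ≤ n) (a : ℕ → k) (ha : ∀ i, 1 ≤ i → i ≤ n → a i ∈ Z)
    (x₀ : k) (x : ℕ → k) (hx0 : x 0 = x₀)
    (hstep : ∀ i, x (i + 1) = (x i)⁻¹ - a (i + 1))
    (hxne : ∀ i < n, x i ≠ 0) (hlt : ∀ i ≤ n, ‖x i‖ < 1) :
    ∀ i, 1 ≤ i → i ≤ n → (cfPQ (suffList a i n)).2 ≠ 0 := by
  set Q : ℕ → k := fun i => (cfPQ (suffList a i n)).2 with hQdef
  set P : ℕ → k := fun i => (cfPQ (suffList a i n)).1 with hPdef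
  set E : ℕ → k := fun j => x j * Q (j + 1) - P (j + 1) with hEdef
  -- the recursion on P, Q coming from consing the head digit
  have hPQ : ∀ i ≤ n, P i = Q (i + 1) ∧ Q i = a i * Q (i + 1) + P (i + 1) := by
    intro i hi
    have := suffList_cons a i n hi
    constructor
    · simp [hPdef, hQdef, this, cfPQ]
    · simp [hPdef, hQdef, this, cfPQ]
  have hQtop : Q (n + 1) = 1 := by simp [hQdef, suffList_nil, cfPQ]
  have hPtop : P (n + 1) = 0 := by simp [hPdef, suffList_nil, cfPQ]
  -- E n = x n
  have hEn : E n = x n := by simp [hEdef, hQtop, hPtop]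
  -- E j = -(x j * E (j+1)) for j < n
  have hEstep : ∀ j < n, E j = -(x j * E (j + 1)) := by
    intro j hj
    have hxj : x j ≠ 0 := hxne j hj
    have hPQ1 := hPQ (j + 1) (by omega)
    have hxa : x j * a (j + 1) = 1 - x j * x (j + 1) := by
      have h1 : a (j + 1) = (x j)⁻¹ - x (j + 1) := by
        rw [hstep j, sub_sub_cancel]
      rw [h1, mul_sub, mul_inv_cancel₀ hxj]
    simp only [hEdef, hPQ1.1, hPQ1.2]
    rw [mul_add, ← mul_assoc, hxa]
    noncomm_ring
  -- ‖E j‖ < 1 for j ≤ n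
  have hEnorm : ∀ d j, j + d = n → ‖E j‖ < 1 := by
    intro d
    induction d with
    | zero =>
      intro j hj
      rw [show j = n by omega, hEn]
      exact hlt n le_rfl
    | succ d ih =>
      intro j hj
      have hjn : j < n := by omega
      rw [hEstep j hjn, norm_neg, norm_mul]
      have h1 : ‖x j‖ < 1 := hlt j (by omega)
      have h2 : ‖E (j + 1)‖ < 1 := ih (j + 1) (by omega)
      have h1' : 0 ≤ ‖x j‖ := norm_nonneg _
      have h2' : 0 ≤ ‖E (j + 1)‖ := norm_nonneg _
      nlinarith
  -- Q i ∈ Z for 1 ≤ i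
  have hQmem : ∀ i, 1 ≤ i → Q i ∈ Z := by
    intro i hi
    refine (cfPQ_mem Z (suffList a i n) ?_).2
    intro z hz
    simp only [suffList, List.mem_map, List.mem_range] at hz
    obtain ⟨j, hj, rfl⟩ := hz
    exact ha (i + j) (by omega) (by omega)
  -- main downward induction
  have key : ∀ d i, i + d = n + 1 → 1 ≤ i → Q i ≠ 0 := by
    intro d
    induction d with
    | zero =>
      intro i hi _
      have : i = n + 1 := by omega
      subst this
      rw [hQtop]
      exact one_ne_zero
    | succ d ih =>
      intro i hi h1i
      have hin : i ≤ n := by omega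
      have hQ1 : Q (i + 1) ≠ 0 := ih (i + 1) (by omega) (by omega)
      intro hQ0
      obtain ⟨i', rfl⟩ : ∃ i', i = i' + 1 := ⟨i - 1, by omega⟩
      -- E i' = x i' * Q (i'+1) - P (i'+1) = - Q (i'+2)
      have hP : P (i' + 1) = Q (i' + 2) := (hPQ (i' + 1) hin).1
      have hE : E i' = -Q (i' + 2) := by
        simp [hEdef, hQ0, hP]
      have hnorm : ‖Q (i' + 2)‖ < 1 := by
        have := hEnorm (n - i') i' (by omega)
        rwa [hE, norm_neg] at this
      have hge : 1 ≤ ‖Q (i' + 2)‖ :=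
        hZ _ (hQmem (i' + 2) (by omega)) hQ1
      linarith
  intro i h1 h2
  exact key (n + 1 - i) i (by omega) h1
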